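/- Let f : {0,1}^n → {0,1} be computable by a decision tree of depth at most d. Define the decision tree T_f recursively: if f is a constant, T_f is a leaf labeled with that constant; otherwise, let M = x_{i_1}⋯x_{i_{d'}} (with i_1 < ⋯ < i_{d'}) be the first (in a fixed order, say lexicographic) maximal monomial of the multilinear polynomial representation of f, let the first d' levels of T_f be a complete binary tree in which every node at level j is labeled x_{i_j}, and at the node reached by the bit sequence (ξ_1,…,ξ_{d'}) attach recursively the tree T_g for g = f_{|x_{i_1}←ξ_1,…,x_{i_{d'}}←ξ_{d'}}. Then T_f computes f and has depth at most d². -/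

import Mathlib

/-- Binary decision trees over `n` Boolean variables. -/
inductive DTree (n : ℕ) : Type where
  | leaf : Bool → DTree n
  | node : Fin n → DTree n → DTree n → DTree n

namespace DTree

/-- Evaluation of a decision tree on an input `x`: at a node labeled `i`,
go right if `x i = true` and left otherwise. -/
def eval {n : ℕ} : DTree n → (Fin n → Bool) → Bool
  | leaf b, _ => b
  | node i t0 t1, x => if x i then eval t1 x else eval t0 x

/-- Depth of a decision tree: maximum number of edges on a root-to-leaf path. -/
def depth {n : ℕ} : DTree n → ℕ
  | leaf _ => 0
  | node _ t0 t1 => 1 + max (depth t0) (depth t1)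

end DTree

/-- Evaluation of a multilinear monomial (a set of variables) at a point. -/
def evalMono {n : ℕ} (M : Finset (Fin n)) (x : Fin n → Bool) : Bool :=
  decide (∀ i ∈ M, x i = true)

/-- Evaluation at `x` of the multilinear polynomial over `F₂` whose set of
monomials is `S` (sum modulo 2 of the monomials of `S`). -/
def polyEval {n : ℕ} (S : Finset (Finset (Fin n))) (x : Fin n → Bool) : Bool :=
  decide ((S.filter (fun M => evalMono M x = true)).card % 2 = 1)

/-- `S` is the (unique) multilinear `F₂`-polynomial representation of `f`:
the polynomial with monomial set `S` computes `f` everywhere. -/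
def Represents {n : ℕ} (S : Finset (Finset (Fin n))) (f : (Fin n → Bool) → Bool) : Prop :=
  ∀ x, polyEval S x = f x

/-- The restriction of `f` obtained by substituting, for each `i ∈ A`, the
value `ξ i` for the variable `x_i`. -/
def restrictSet {n : ℕ} (f : (Fin n → Bool) → Bool) (A : Finset (Fin n))
    (ξ : Fin n → Bool) : (Fin n → Bool) → Bool :=
  fun x => f (fun i => if i ∈ A then ξ i else x i)

/-- The complete tree querying the variables of the list `l` in order, and
attaching at the end of the branch described by the bits `bs` the tree `k bs`. -/
def prefixTree {n : ℕ} : List (Fin n) → (List Bool → DTree n) → DTree n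
  | [], k => k []
  | i :: l, k =>
      DTree.node i (prefixTree l fun bs => k (false :: bs))
        (prefixTree l fun bs => k (true :: bs))

/-- `MMTree f T` holds when `T` is obtained from `f` by the recursive
construction: if `f` is constant, `T` is a leaf labeled with that constant;
otherwise a maximal monomial `M` of the polynomial representation of `f` is
chosen, the first `|M|` levels of `T` form a complete tree querying the
(sorted) variables of `M`, and at the node reached by the bits `ξ` the
construction is applied recursively to the corresponding restriction of `f`. -/
inductive MMTree {n : ℕ} : ((Fin n → Bool) → Bool) → DTree n → Prop where
  | leaf (f : (Fin n → Bool) → Bool) (b : Bool) (hconst : ∀ x, f x = b) :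
      MMTree f (DTree.leaf b)
  | node (f : (Fin n → Bool) → Bool)
      (hnc : ¬ ∃ b : Bool, ∀ x, f x = b)
      (S : Finset (Finset (Fin n))) (hS : Represents S f)
      (M : Finset (Fin n)) (hM : M ∈ S)
      (hmax : ∀ M' ∈ S, M' ≠ M → ¬ M ⊆ M')
      (k : List Bool → DTree n)
      (hk : ∀ ξ : Fin n → Bool,
        MMTree (restrictSet f M ξ) (k ((M.sort (· ≤ ·)).map ξ))) :
      MMTree f (prefixTree (M.sort (· ≤ ·)) k)

def b2z (b : Bool) : ZMod 2 := if b then 1 else 0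

section
variable {n : ℕ}

def mergeF (M A : Finset (Fin n)) (z : Fin n → Bool) : Fin n → Bool :=
  fun i => if i ∈ M then decide (i ∈ A) else z i

def Gpar (f : (Fin n → Bool) → Bool) (M : Finset (Fin n)) (z : Fin n → Bool) : ZMod 2 :=
  ∑ A ∈ M.powerset, b2z (f (mergeF M A z))

lemma Gpar_congr {f g : (Fin n → Bool) → Bool} (h : ∀ x, f x = g x) (M : Finset (Fin n))
    (z : Fin n → Bool) : Gpar f M z = Gpar g M z := by
  unfold Gpar; exact Finset.sum_congr rfl fun A _ => by rw [h]

lemma two_pow_smul (k : ℕ) (hk : 1 ≤ k) (c : ZMod 2) : (2 ^ k) • c = 0 := by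
  rw [nsmul_eq_mul, Nat.cast_pow]
  rw [show ((2:ℕ):ZMod 2) = 0 from rfl, zero_pow (by omega), zero_mul]

lemma Gpar_const (b : Bool) (M : Finset (Fin n)) (hM : M.Nonempty) (z : Fin n → Bool) :
    Gpar (fun _ => b) M z = 0 := by
  unfold Gpar
  rw [Finset.sum_const, Finset.card_powerset]
  exact two_pow_smul M.card (Finset.card_pos.mpr hM) (b2z b)

end
section
variable {n : ℕ}

lemma mergeF_erase_false (M : Finset (Fin n)) (i : Fin n) (hi : i ∈ M) (A : Finset (Fin n))
    (hA : A ∈ (M.erase i).powerset) (z : Fin n → Bool) :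
    mergeF M A z = mergeF (M.erase i) A (Function.update z i false) := by
  funext j
  unfold mergeF
  rcases eq_or_ne j i with rfl | hj
  · simp [hi, Finset.mem_powerset] at *
    intro hjA
    exact absurd (hA hjA) (by simp)
  · by_cases hjM : j ∈ M <;> simp [hjM, hj, Finset.mem_erase, Function.update_of_ne hj]

lemma mergeF_erase_true (M : Finset (Fin n)) (i : Fin n) (hi : i ∈ M) (A : Finset (Fin n))
    (hA : A ∈ (M.erase i).powerset) (z : Fin n → Bool) :
    mergeF M (insert i A) z = mergeF (M.erase i) A (Function.update z i true) := by
  funext j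
  unfold mergeF
  rcases eq_or_ne j i with rfl | hj
  · simp [hi]
  · by_cases hjM : j ∈ M <;> simp [hjM, hj, Finset.mem_erase, Function.update_of_ne hj]

lemma Gpar_tree (t : DTree n) : ∀ (M : Finset (Fin n)) (z : Fin n → Bool),
    t.depth < M.card → Gpar t.eval M z = 0 := by
  induction t with
  | leaf b =>
    intro M z hd
    have hM : M.Nonempty := Finset.card_pos.mp (by omega)
    exact Gpar_const b M hM z
  | node i t0 t1 ih0 ih1 =>
    intro M z hd
    have hdep : DTree.depth (DTree.node i t0 t1) = 1 + max t0.depth t1.depth := rfl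
    by_cases hi : i ∈ M
    · have hins : M = insert i (M.erase i) := (Finset.insert_erase hi).symm
      have hnotin : i ∉ M.erase i := Finset.notMem_erase i M
      unfold Gpar
      rw [hins, Finset.sum_powerset_insert hnotin]
      have h0 : ∑ A ∈ (M.erase i).powerset, b2z ((DTree.node i t0 t1).eval (mergeF (insert i (M.erase i)) A z))
          = Gpar t0.eval (M.erase i) (Function.update z i false) := by
        apply Finset.sum_congr rfl
        intro A hA
        rw [← hins, mergeF_erase_false M i hi A hA]
        have hxi : mergeF (M.erase i) A (Function.update z i false) i = false := by
          simp [mergeF, hnotin, Function.update_self]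
        show b2z (if (mergeF (M.erase i) A (Function.update z i false)) i then _ else _) = _
        rw [hxi]
        simp
      have h1 : ∑ A ∈ (M.erase i).powerset, b2z ((DTree.node i t0 t1).eval (mergeF (insert i (M.erase i)) (insert i A) z))
          = Gpar t1.eval (M.erase i) (Function.update z i true) := by
        apply Finset.sum_congr rfl
        intro A hA
        rw [← hins, mergeF_erase_true M i hi A hA]
        have hxi : mergeF (M.erase i) A (Function.update z i true) i = true := by
          simp [mergeF, hnotin, Function.update_self]
        show b2z (if (mergeF (M.erase i) A (Function.update z i true)) i then _ else _) = _
        rw [hxi]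
        simp
      rw [h0, h1]
      have hcard : (M.erase i).card = M.card - 1 := Finset.card_erase_of_mem hi
      have hc : 1 ≤ M.card := Finset.card_pos.mpr ⟨i, hi⟩
      rw [ih0 _ _ (by omega), ih1 _ _ (by omega)]
      ring
    · cases hz : z i
      · have h2 : ∀ A ∈ M.powerset, b2z ((DTree.node i t0 t1).eval (mergeF M A z))
            = b2z (t0.eval (mergeF M A z)) := by
          intro A hA
          have hxi : mergeF M A z i = false := by simp [mergeF, hi, hz]
          show b2z (if (mergeF M A z) i then _ else _) = _
          rw [hxi]
          simp
        rw [show Gpar (DTree.node i t0 t1).eval M z = ∑ A ∈ M.powerset, b2z ((DTree.node i t0 t1).eval (mergeF M A z)) from rfl]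
        rw [Finset.sum_congr rfl h2]
        exact ih0 M z (by omega)
      · have h2 : ∀ A ∈ M.powerset, b2z ((DTree.node i t0 t1).eval (mergeF M A z))
            = b2z (t1.eval (mergeF M A z)) := by
          intro A hA
          have hxi : mergeF M A z i = true := by simp [mergeF, hi, hz]
          show b2z (if (mergeF M A z) i then _ else _) = _
          rw [hxi]
          simp
        rw [show Gpar (DTree.node i t0 t1).eval M z = ∑ A ∈ M.powerset, b2z ((DTree.node i t0 t1).eval (mergeF M A z)) from rfl]
        rw [Finset.sum_congr rfl h2]
        exact ih1 M z (by omega)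
end
section
variable {n : ℕ}

lemma b2z_and (a b : Bool) : b2z (a && b) = b2z a * b2z b := by
  cases a <;> cases b <;> simp [b2z]

lemma card_superset_filter (B M : Finset (Fin n)) (hBM : B ⊆ M) :
    (M.powerset.filter (fun A => B ⊆ A)).card = 2 ^ (M \ B).card := by
  rw [← Finset.card_powerset]
  apply Finset.card_nbij' (fun A => A \ B) (fun C => C ∪ B)
  · intro A hA
    simp only [Finset.mem_coe, Finset.mem_filter, Finset.mem_powerset] at *
    exact Finset.sdiff_subset_sdiff hA.1 (le_refl B)
  · intro C hC
    simp only [Finset.mem_coe, Finset.mem_filter, Finset.mem_powerset] at *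
    constructor
    · exact Finset.union_subset (hC.trans (Finset.sdiff_subset)) hBM
    · exact Finset.subset_union_right
  · intro A hA
    simp only [Finset.mem_coe, Finset.mem_filter, Finset.mem_powerset] at hA
    exact Finset.sdiff_union_of_subset hA.2
  · intro C hC
    simp only [Finset.mem_coe, Finset.mem_powerset] at hC
    show (C ∪ B) \ B = C
    rw [Finset.union_sdiff_right]
    exact Finset.sdiff_eq_self_of_disjoint (Finset.disjoint_of_subset_left hC Finset.sdiff_disjoint)

lemma sum_indicator_superset (B M : Finset (Fin n)) (hBM : B ⊆ M) :
    ∑ A ∈ M.powerset, b2z (decide (B ⊆ A)) = if B = M then 1 else 0 := by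
  have h1 : ∑ A ∈ M.powerset, b2z (decide (B ⊆ A))
      = ((M.powerset.filter (fun A => B ⊆ A)).card : ZMod 2) := by
    rw [Finset.card_filter, Nat.cast_sum]
    apply Finset.sum_congr rfl
    intro A _
    by_cases h : B ⊆ A <;> simp [b2z, h]
  rw [h1, card_superset_filter B M hBM]
  rcases Nat.eq_zero_or_pos (M \ B).card with h | h
  · have : M = B := by
      have := Finset.card_eq_zero.mp h
      have h2 : M ⊆ B := fun i hi => by
        by_contra hib
        exact absurd (Finset.mem_sdiff.mpr ⟨hi, hib⟩) (by rw [this]; simp)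
      exact Finset.Subset.antisymm h2 hBM
    rw [if_pos this.symm, h]
    norm_num
  · have hne : B ≠ M := by
      intro hEq
      rw [hEq, Finset.sdiff_self] at h
      simp at h
    rw [if_neg hne, Nat.cast_pow, show ((2:ℕ):ZMod 2) = 0 from rfl, zero_pow (by omega)]
end
section
variable {n : ℕ}

lemma b2z_inj {a b : Bool} (h : b2z a = b2z b) : a = b := by
  cases a <;> cases b <;> simp_all [b2z]

lemma natCast_zmod2 (c : ℕ) : (c : ZMod 2) = if c % 2 = 1 then 1 else 0 := by
  conv_lhs => rw [← Nat.div_add_mod c 2]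
  push_cast
  rcases Nat.mod_two_eq_zero_or_one c with h | h <;> rw [h] <;>
    simp
  all_goals (left; decide)

lemma polyEval_b2z {n : ℕ} (S : Finset (Finset (Fin n))) (x : Fin n → Bool) :
    b2z (polyEval S x) = ∑ N ∈ S, b2z (evalMono N x) := by
  have h1 : ∑ N ∈ S, b2z (evalMono N x)
      = ((S.filter (fun M => evalMono M x = true)).card : ZMod 2) := by
    rw [Finset.card_filter, Nat.cast_sum]
    apply Finset.sum_congr rfl
    intro N _
    cases hN : evalMono N x <;> simp [b2z, hN]
  rw [h1, natCast_zmod2, polyEval, b2z]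
  rcases Nat.mod_two_eq_zero_or_one (S.filter (fun M => evalMono M x = true)).card with h | h <;>
    simp [h]

lemma evalMono_mergeF (N M A : Finset (Fin n)) (hA : A ⊆ M) (z : Fin n → Bool) :
    evalMono N (mergeF M A z) = (decide (N ∩ M ⊆ A) && evalMono (N \ M) z) := by
  rw [evalMono, evalMono, ← Bool.decide_and]
  apply decide_eq_decide.mpr
  constructor
  · intro h
    refine ⟨fun i hi => ?_, fun i hi => ?_⟩
    · obtain ⟨hiN, hiM⟩ := Finset.mem_inter.mp hi
      have := h i hiN
      simpa [mergeF, hiM] using this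
    · obtain ⟨hiN, hiM⟩ := Finset.mem_sdiff.mp hi
      have := h i hiN
      simpa [mergeF, hiM] using this
  · rintro ⟨h1, h2⟩ i hi
    by_cases hiM : i ∈ M
    · simp only [mergeF, if_pos hiM, decide_eq_true_eq]
      exact h1 (Finset.mem_inter.mpr ⟨hi, hiM⟩)
    · simpa [mergeF, hiM] using h2 i (Finset.mem_sdiff.mpr ⟨hi, hiM⟩)

lemma Gpar_poly (S : Finset (Finset (Fin n))) (M : Finset (Fin n)) (z : Fin n → Bool) :
    Gpar (polyEval S) M z = ∑ N ∈ S, if M ⊆ N then b2z (evalMono (N \ M) z) else 0 := by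
  unfold Gpar
  have h1 : ∀ A ∈ M.powerset, b2z (polyEval S (mergeF M A z))
      = ∑ N ∈ S, b2z (evalMono N (mergeF M A z)) := fun A _ => polyEval_b2z S _
  rw [Finset.sum_congr rfl h1, Finset.sum_comm]
  apply Finset.sum_congr rfl
  intro N _
  have h2 : ∀ A ∈ M.powerset, b2z (evalMono N (mergeF M A z))
      = b2z (decide (N ∩ M ⊆ A)) * b2z (evalMono (N \ M) z) := by
    intro A hA
    rw [evalMono_mergeF N M A (Finset.mem_powerset.mp hA) z, b2z_and]
  rw [Finset.sum_congr rfl h2, ← Finset.sum_mul,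
    sum_indicator_superset (N ∩ M) M Finset.inter_subset_right]
  by_cases hMN : M ⊆ N
  · have h3 : N ∩ M = M := Finset.inter_eq_right.mpr hMN
    rw [if_pos h3, if_pos hMN, one_mul]
  · have h3 : N ∩ M ≠ M := by
      intro hEq
      apply hMN
      intro i hi
      rw [← hEq] at hi
      exact Finset.mem_of_mem_inter_left hi
    rw [if_neg h3, if_neg hMN, zero_mul]
end
section
variable {n : ℕ}

lemma Gpar_represents {S : Finset (Finset (Fin n))} {f : (Fin n → Bool) → Bool}
    (hS : Represents S f) (M : Finset (Fin n)) (z : Fin n → Bool) :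
    Gpar f M z = ∑ N ∈ S, if M ⊆ N then b2z (evalMono (N \ M) z) else 0 :=
  (Gpar_congr (fun x => (hS x).symm) M z).trans (Gpar_poly S M z)

lemma evalMono_empty (z : Fin n → Bool) : evalMono (∅ : Finset (Fin n)) z = true := by
  simp [evalMono]

lemma Gpar_maximal {S : Finset (Finset (Fin n))} {f : (Fin n → Bool) → Bool}
    {M : Finset (Fin n)} (hS : Represents S f) (hM : M ∈ S)
    (hmax : ∀ M' ∈ S, M' ≠ M → ¬ M ⊆ M') (z : Fin n → Bool) :
    Gpar f M z = 1 := by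
  rw [Gpar_represents hS M z]
  rw [Finset.sum_eq_single_of_mem M hM]
  · rw [if_pos (Finset.Subset.refl M), Finset.sdiff_self, evalMono_empty]
    rfl
  · intro N hN hne
    rw [if_neg (hmax N hN hne)]

lemma nonconst_of_maximal {S : Finset (Finset (Fin n))} {f : (Fin n → Bool) → Bool}
    {M : Finset (Fin n)} (hS : Represents S f) (hM : M ∈ S)
    (hmax : ∀ M' ∈ S, M' ≠ M → ¬ M ⊆ M') (hMne : M.Nonempty) (b : Bool)
    (hconst : ∀ x, f x = b) : False := by
  have h1 : Gpar f M (fun _ => false) = 1 := Gpar_maximal hS hM hmax _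
  have h2 : Gpar f M (fun _ => false) = 0 := by
    rw [Gpar_congr hconst M _]
    exact Gpar_const b M hMne _
  rw [h1] at h2
  exact one_ne_zero h2

lemma card_monomial_le_depth {S : Finset (Finset (Fin n))} {f : (Fin n → Bool) → Bool}
    {M : Finset (Fin n)} (t : DTree n) (ht : ∀ x, t.eval x = f x)
    (hS : Represents S f) (hM : M ∈ S) : M.card ≤ t.depth := by
  by_contra hlt
  push_neg at hlt
  have h0 : Gpar f M (fun _ => false) = 0 := by
    rw [← Gpar_congr ht M _]
    exact Gpar_tree t M _ hlt
  have h1 : Gpar f M (fun _ => false) = 1 := by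
    rw [Gpar_represents hS M _]
    rw [Finset.sum_eq_single_of_mem M hM]
    · rw [if_pos (Finset.Subset.refl M), Finset.sdiff_self, evalMono_empty]
      rfl
    · intro N hN hne
      by_cases hMN : M ⊆ N
      · rw [if_pos hMN]
        have hne2 : (N \ M).Nonempty := by
          rw [Finset.sdiff_nonempty]
          intro hsub
          exact hne (Finset.Subset.antisymm hsub hMN)
        obtain ⟨i, hi⟩ := hne2
        have : evalMono (N \ M) (fun _ => false) = false := by
          simp only [evalMono, decide_eq_false_iff_not]
          intro hall
          exact absurd (hall i hi) (by simp)
        rw [this]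
        rfl
      · rw [if_neg hMN]
  rw [h0] at h1
  exact zero_ne_one h1
end
section
variable {n : ℕ}

def ov (σ : Fin n → Option Bool) (x : Fin n → Bool) : Fin n → Bool :=
  fun i => (σ i).getD (x i)

def prune {n : ℕ} : DTree n → (Fin n → Option Bool) → DTree n
  | .leaf b, _ => .leaf b
  | .node i t0 t1, σ =>
    match σ i with
    | some true => prune t1 σ
    | some false => prune t0 σ
    | none => .node i (prune t0 σ) (prune t1 σ)

lemma prune_eval (t : DTree n) (σ : Fin n → Option Bool) (x : Fin n → Bool) :
    (prune t σ).eval x = t.eval (ov σ x) := by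
  induction t with
  | leaf b => rfl
  | node i t0 t1 ih0 ih1 =>
    show (prune (.node i t0 t1) σ).eval x = if (ov σ x) i then t1.eval (ov σ x) else t0.eval (ov σ x)
    cases hσ : σ i with
    | some b =>
      have hov : ov σ x i = b := by simp [ov, hσ]
      cases b
      · rw [hov, if_neg (by simp)]
        rw [show prune (.node i t0 t1) σ = prune t0 σ by rw [prune, hσ]]
        exact ih0
      · rw [hov, if_pos rfl]
        rw [show prune (.node i t0 t1) σ = prune t1 σ by rw [prune, hσ]]
        exact ih1
    | none =>
      have hov : ov σ x i = x i := by simp [ov, hσ]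
      rw [show prune (.node i t0 t1) σ = .node i (prune t0 σ) (prune t1 σ) by rw [prune, hσ]]
      show (if x i then (prune t1 σ).eval x else (prune t0 σ).eval x) = _
      rw [hov]
      cases x i <;> simp [ih0, ih1]

lemma prune_depth (t : DTree n) (σ : Fin n → Option Bool) :
    (prune t σ).depth ≤ t.depth := by
  induction t with
  | leaf b => exact le_refl _
  | node i t0 t1 ih0 ih1 =>
    have hd : (DTree.node i t0 t1).depth = 1 + max t0.depth t1.depth := rfl
    cases hσ : σ i with
    | some b =>
      cases b
      · rw [show prune (.node i t0 t1) σ = prune t0 σ by rw [prune, hσ]]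
        omega
      · rw [show prune (.node i t0 t1) σ = prune t1 σ by rw [prune, hσ]]
        omega
    | none =>
      rw [show prune (.node i t0 t1) σ = .node i (prune t0 σ) (prune t1 σ) by rw [prune, hσ]]
      show 1 + max (prune t0 σ).depth (prune t1 σ).depth ≤ _
      omega
end
section
variable {n : ℕ}

lemma sum_symmDiff' (A B : Finset (Finset (Fin n))) (m : Finset (Fin n) → ZMod 2) :
    ∑ N ∈ symmDiff A B, m N = ∑ N ∈ A, m N + ∑ N ∈ B, m N := by
  classical
  have hA : ∑ N ∈ A, m N = ∑ N ∈ A \ B, m N + ∑ N ∈ A ∩ B, m N := by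
    rw [← Finset.sum_union (Finset.disjoint_sdiff_inter A B), Finset.sdiff_union_inter]
  have hB : ∑ N ∈ B, m N = ∑ N ∈ B \ A, m N + ∑ N ∈ B ∩ A, m N := by
    rw [← Finset.sum_union (Finset.disjoint_sdiff_inter B A), Finset.sdiff_union_inter]
  have hS : symmDiff A B = (A \ B) ∪ (B \ A) := rfl
  rw [hS, Finset.sum_union disjoint_sdiff_sdiff, hA, hB, Finset.inter_comm]
  ring_nf
  rw [show ((2:ZMod 2)) = 0 from rfl]
  ring

lemma represents_of_b2z (S : Finset (Finset (Fin n))) (f : (Fin n → Bool) → Bool)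
    (h : ∀ x, b2z (f x) = ∑ N ∈ S, b2z (evalMono N x)) : Represents S f := by
  intro x
  apply b2z_inj
  rw [polyEval_b2z, h]

lemma evalMono_update_not_mem {N : Finset (Fin n)} {i : Fin n} (hi : i ∉ N)
    (x : Fin n → Bool) (b : Bool) :
    evalMono N (Function.update x i b) = evalMono N x := by
  unfold evalMono
  apply decide_eq_decide.mpr
  constructor
  · intro h j hj
    have hji : j ≠ i := fun hEq => hi (hEq ▸ hj)
    have := h j hj
    simpa [Function.update_of_ne hji] using this
  · intro h j hj
    have hji : j ≠ i := fun hEq => hi (hEq ▸ hj)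
    rw [Function.update_of_ne hji]
    exact h j hj

lemma evalMono_update_mem {N : Finset (Fin n)} {i : Fin n} (hi : i ∈ N)
    (x : Fin n → Bool) (b : Bool) :
    evalMono N (Function.update x i b) = (b && evalMono (N.erase i) x) := by
  cases b
  · simp only [Bool.false_and]
    unfold evalMono
    simp only [decide_eq_false_iff_not]
    intro hall
    have := hall i hi
    simp [Function.update_self] at this
  · simp only [Bool.true_and]
    unfold evalMono
    apply decide_eq_decide.mpr
    constructor
    · intro h j hj
      obtain ⟨hji, hjN⟩ := Finset.mem_erase.mp hj
      have := h j hjN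
      simpa [Function.update_of_ne hji] using this
    · intro h j hj
      rcases eq_or_ne j i with rfl | hji
      · simp [Function.update_self]
      · rw [Function.update_of_ne hji]
        exact h j (Finset.mem_erase.mpr ⟨hji, hj⟩)

/-- Monomial set representing `fun x => h (Function.update x i b)`. -/
def updRep (S : Finset (Finset (Fin n))) (i : Fin n) (b : Bool) : Finset (Finset (Fin n)) :=
  if b then
    symmDiff (S.filter (fun N => i ∉ N)) ((S.filter (fun N => i ∈ N)).image (fun N => N.erase i))
  else S.filter (fun N => i ∉ N)

lemma represents_update {S : Finset (Finset (Fin n))} {h : (Fin n → Bool) → Bool}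
    (hS : Represents S h) (i : Fin n) (b : Bool) :
    Represents (updRep S i b) (fun x => h (Function.update x i b)) := by
  apply represents_of_b2z
  intro x
  have h0 : b2z (h (Function.update x i b)) = ∑ N ∈ S, b2z (evalMono N (Function.update x i b)) := by
    rw [← hS (Function.update x i b), polyEval_b2z]
  rw [h0, ← Finset.sum_filter_add_sum_filter_not S (fun N => i ∈ N)]
  have h1 : ∑ N ∈ S.filter (fun N => ¬ i ∈ N), b2z (evalMono N (Function.update x i b))
      = ∑ N ∈ S.filter (fun N => ¬ i ∈ N), b2z (evalMono N x) :=
    Finset.sum_congr rfl fun N hN => by rw [evalMono_update_not_mem (Finset.mem_filter.mp hN).2]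
  have h2 : ∑ N ∈ S.filter (fun N => i ∈ N), b2z (evalMono N (Function.update x i b))
      = ∑ N ∈ S.filter (fun N => i ∈ N), b2z (b && evalMono (N.erase i) x) :=
    Finset.sum_congr rfl fun N hN => by rw [evalMono_update_mem (Finset.mem_filter.mp hN).2]
  rw [h1, h2]
  cases b
  · have hz : ∑ N ∈ S.filter (fun N => i ∈ N), b2z (false && evalMono (N.erase i) x) = 0 := by
      apply Finset.sum_eq_zero
      intro N _
      rfl
    rw [hz, zero_add]
    rfl
  · have himg : ∑ N ∈ S.filter (fun N => i ∈ N), b2z (true && evalMono (N.erase i) x)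
        = ∑ K ∈ (S.filter (fun N => i ∈ N)).image (fun N => N.erase i), b2z (evalMono K x) := by
      rw [Finset.sum_image ?inj]
      · apply Finset.sum_congr rfl
        intro N _
        rw [Bool.true_and]
      case inj =>
        intro N hN N' hN' hEq
        have hiN : i ∈ N := (Finset.mem_filter.mp hN).2
        have hiN' : i ∈ N' := (Finset.mem_filter.mp hN').2
        rw [← Finset.insert_erase hiN, ← Finset.insert_erase hiN', show N.erase i = N'.erase i from hEq]
    rw [himg]
    show _ = ∑ N ∈ updRep S i true, b2z (evalMono N x)
    rw [show updRep S i true = symmDiff (S.filter (fun N => i ∉ N))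
      ((S.filter (fun N => i ∈ N)).image (fun N => N.erase i)) from rfl]
    rw [sum_symmDiff']
    exact add_comm _ _
end
section
variable {n : ℕ}

lemma mem_updRep {S : Finset (Finset (Fin n))} {M : Finset (Fin n)} {i : Fin n} (b : Bool)
    (hM : M ∈ S) (hiM : i ∉ M) (hmax : ∀ M' ∈ S, M' ≠ M → ¬ M ⊆ M') :
    M ∈ updRep S i b := by
  cases b
  · exact Finset.mem_filter.mpr ⟨hM, hiM⟩
  · unfold updRep
    rw [if_pos rfl]
    apply Finset.mem_symmDiff.mpr
    left
    refine ⟨Finset.mem_filter.mpr ⟨hM, hiM⟩, ?_⟩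
    intro hMimg
    obtain ⟨N, hN, hNe⟩ := Finset.mem_image.mp hMimg
    have hiN : i ∈ N := (Finset.mem_filter.mp hN).2
    have hNS : N ∈ S := (Finset.mem_filter.mp hN).1
    have hMN : M ⊆ N := by rw [← hNe]; exact Finset.erase_subset i N
    have hne : N ≠ M := fun hEq => hiM (hEq ▸ hiN)
    exact hmax N hNS hne hMN

lemma updRep_max {S : Finset (Finset (Fin n))} {M : Finset (Fin n)} {i : Fin n} (b : Bool)
    (hmax : ∀ M' ∈ S, M' ≠ M → ¬ M ⊆ M') (hiM : i ∉ M) :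
    ∀ M' ∈ updRep S i b, M' ≠ M → ¬ M ⊆ M' := by
  intro M' hM' hne hsub
  have hM'cases : M' ∈ S.filter (fun N => i ∉ N) ∨
      M' ∈ (S.filter (fun N => i ∈ N)).image (fun N => N.erase i) := by
    cases b
    · exact Or.inl hM'
    · unfold updRep at hM'
      rw [if_pos rfl] at hM'
      rcases Finset.mem_symmDiff.mp hM' with ⟨h1, _⟩ | ⟨h1, _⟩
      exacts [Or.inl h1, Or.inr h1]
  rcases hM'cases with h1 | h1
  · exact hmax M' (Finset.mem_filter.mp h1).1 hne hsub
  · obtain ⟨N, hN, rfl⟩ := Finset.mem_image.mp h1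
    have hiN : i ∈ N := (Finset.mem_filter.mp hN).2
    have hNS : N ∈ S := (Finset.mem_filter.mp hN).1
    have hMN : M ⊆ N := hsub.trans (Finset.erase_subset i N)
    have hne2 : N ≠ M := fun hEq => hiM (hEq ▸ hiN)
    exact hmax N hNS hne2 hMN

lemma lemB : ∀ d : ℕ, ∀ t : DTree n, ∀ h : (Fin n → Bool) → Bool,
    ∀ S : Finset (Finset (Fin n)), ∀ M : Finset (Fin n),
    t.depth ≤ d → (∀ x, t.eval x = h x) → Represents S h → M ∈ S → M.Nonempty →
    (∀ M' ∈ S, M' ≠ M → ¬ M ⊆ M') → ∀ ξ : Fin n → Bool,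
    ∃ t' : DTree n, (∀ x, t'.eval x = restrictSet h M ξ x) ∧ t'.depth + 1 ≤ d := by
  intro d
  induction d using Nat.strong_induction_on with
  | _ d ih =>
  intro t h S M hdep heval hS hM hMne hmax ξ
  cases t with
  | leaf b =>
    exact absurd (nonconst_of_maximal hS hM hmax hMne b (fun x => (heval x).symm)) not_false
  | node i t0 t1 =>
    have hdd : (DTree.node i t0 t1).depth = 1 + max t0.depth t1.depth := rfl
    have hd0 : t0.depth + 1 ≤ d := by omega
    have hd1 : t1.depth + 1 ≤ d := by omega
    by_cases hiM : i ∈ M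
    · -- query a variable of M: take the ξ i branch and prune
      set σM : Fin n → Option Bool := (fun j => if j ∈ M then some (ξ j) else none) with hσM
      have hovx : ∀ x : Fin n → Bool, ov σM x = fun j => if j ∈ M then ξ j else x j := by
        intro x
        funext j
        by_cases hj : j ∈ M <;> simp [ov, hσM, hj]
      have hovi : ∀ x : Fin n → Bool, ov σM x i = ξ i := by
        intro x
        rw [hovx]
        simp [hiM]
      have hnode : ∀ y : Fin n → Bool, (DTree.node i t0 t1).eval y
          = if y i then t1.eval y else t0.eval y := fun y => rfl
      cases hξ : ξ i
      · refine ⟨prune t0 σM, ?_, ?_⟩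
        · intro x
          rw [prune_eval]
          have h1 := heval (ov σM x)
          rw [hnode, hovi, hξ] at h1
          simp only [Bool.false_eq_true, if_false] at h1
          rw [h1, restrictSet, hovx]
        · have := prune_depth t0 σM
          omega
      · refine ⟨prune t1 σM, ?_, ?_⟩
        · intro x
          rw [prune_eval]
          have h1 := heval (ov σM x)
          rw [hnode, hovi, hξ] at h1
          simp only [if_true] at h1
          rw [h1, restrictSet, hovx]
        · have := prune_depth t1 σM
          omega
    · -- recurse on both children with the restricted functions
      set σi : Bool → (Fin n → Option Bool) := fun b j => if j = i then some b else none with hσi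
      have hovσi : ∀ (b : Bool) (x : Fin n → Bool), ov (σi b) x = Function.update x i b := by
        intro b x
        funext j
        rcases eq_or_ne j i with rfl | hj
        · simp [ov, hσi, Function.update_self]
        · simp [ov, hσi, hj, Function.update_of_ne hj]
      have hnode : ∀ y : Fin n → Bool, (DTree.node i t0 t1).eval y
          = if y i then t1.eval y else t0.eval y := fun y => rfl
      have hkey : ∀ b : Bool, ∃ t' : DTree n,
          (∀ x, t'.eval x = restrictSet (fun x => h (Function.update x i b)) M ξ x) ∧
          t'.depth + 1 ≤ d - 1 := by
        intro b
        have hpe : ∀ x, (prune (if b then t1 else t0) (σi b)).eval x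
            = (fun x => h (Function.update x i b)) x := by
          intro x
          rw [prune_eval, hovσi]
          have h1 := heval (Function.update x i b)
          rw [hnode, Function.update_self] at h1
          cases b
          · simp only [Bool.false_eq_true, if_false] at h1 ⊢
            exact h1
          · simp only [if_true] at h1 ⊢
            exact h1
        have hpd : (prune (if b then t1 else t0) (σi b)).depth ≤ d - 1 := by
          have := prune_depth (if b then t1 else t0) (σi b)
          cases b <;> simp_all <;> omega
        exact ih (d - 1) (by omega) _ _ (updRep S i b) M hpd hpe
          (represents_update hS i b) (mem_updRep b hM hiM hmax) hMne
          (updRep_max b hmax hiM) ξ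
      obtain ⟨U0, hU0e, hU0d⟩ := hkey false
      obtain ⟨U1, hU1e, hU1d⟩ := hkey true
      refine ⟨DTree.node i U0 U1, ?_, ?_⟩
      · intro x
        have hnode2 : (DTree.node i U0 U1).eval x = if x i then U1.eval x else U0.eval x := rfl
        set y : Fin n → Bool := fun j => if j ∈ M then ξ j else x j with hy
        have hyi : y i = x i := by simp [hy, hiM]
        have hupd : Function.update y i (x i) = y := by
          rw [← hyi]
          exact Function.update_eq_self i y
        rw [hnode2]
        cases hxi : x i
        · rw [hU0e, restrictSet]
          show h (Function.update y i false) = _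
          rw [← hxi, hupd]
          rfl
        · rw [hU1e, restrictSet]
          show h (Function.update y i true) = _
          rw [← hxi, hupd]
          rfl
      · have : (DTree.node i U0 U1).depth = 1 + max U0.depth U1.depth := rfl
        omega
end
section
variable {n : ℕ}

lemma evalMono_insert (i : Fin n) (N : Finset (Fin n)) (x : Fin n → Bool) :
    evalMono (insert i N) x = (x i && evalMono N x) := by
  cases hxi : x i
  · simp only [Bool.false_and]
    unfold evalMono
    simp only [decide_eq_false_iff_not]
    intro hall
    exact absurd (hall i (Finset.mem_insert_self i N)) (by simp [hxi])
  · simp only [Bool.true_and]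
    unfold evalMono
    apply decide_eq_decide.mpr
    constructor
    · intro hall j hj
      exact hall j (Finset.mem_insert_of_mem hj)
    · intro hall j hj
      rcases Finset.mem_insert.mp hj with rfl | hj2
      · exact hxi
      · exact hall j hj2

/-- multiplication of a multilinear `F₂` polynomial by the variable `x i`. -/
def mulX (i : Fin n) (S : Finset (Finset (Fin n))) : Finset (Finset (Fin n)) :=
  symmDiff ((S.filter (fun N => i ∉ N)).image (insert i)) (S.filter (fun N => i ∈ N))

lemma sum_mulX (i : Fin n) (S : Finset (Finset (Fin n))) (x : Fin n → Bool) :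
    ∑ K ∈ mulX i S, b2z (evalMono K x) = b2z (x i) * ∑ N ∈ S, b2z (evalMono N x) := by
  rw [Finset.mul_sum]
  have h1 : ∀ N ∈ S, b2z (x i) * b2z (evalMono N x) = b2z (evalMono (insert i N) x) := by
    intro N _
    rw [evalMono_insert, b2z_and]
  rw [Finset.sum_congr rfl h1, ← Finset.sum_filter_add_sum_filter_not S (fun N => i ∈ N)]
  have h2 : ∀ N ∈ S.filter (fun N => i ∈ N), b2z (evalMono (insert i N) x)
      = b2z (evalMono N x) := by
    intro N hN
    rw [Finset.insert_eq_self.mpr (Finset.mem_filter.mp hN).2]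
  have h3 : ∑ N ∈ S.filter (fun N => ¬ i ∈ N), b2z (evalMono (insert i N) x)
      = ∑ K ∈ (S.filter (fun N => i ∉ N)).image (insert i), b2z (evalMono K x) := by
    rw [Finset.sum_image ?inj]
    case inj =>
      intro N hN N' hN' hEq
      have hiN : i ∉ N := (Finset.mem_filter.mp hN).2
      have hiN' : i ∉ N' := (Finset.mem_filter.mp hN').2
      rw [← Finset.erase_insert hiN, ← Finset.erase_insert hiN', hEq]
  rw [Finset.sum_congr rfl h2, h3, mulX, sum_symmDiff']
  exact add_comm _ _

/-- The multilinear `F₂` representation of the function computed by a tree. -/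
def treeRep {n : ℕ} : DTree n → Finset (Finset (Fin n))
  | .leaf false => ∅
  | .leaf true => {∅}
  | .node i t0 t1 => symmDiff (treeRep t0) (mulX i (symmDiff (treeRep t0) (treeRep t1)))

lemma treeRep_represents (t : DTree n) : Represents (treeRep t) t.eval := by
  induction t with
  | leaf b =>
    apply represents_of_b2z
    intro x
    cases b
    · show b2z false = _
      rw [show treeRep (DTree.leaf false) = (∅ : Finset (Finset (Fin n))) from rfl]
      simp [b2z]
    · show b2z true = _
      rw [show treeRep (DTree.leaf true) = ({∅} : Finset (Finset (Fin n))) from rfl]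
      rw [Finset.sum_singleton, evalMono_empty]
  | node i t0 t1 ih0 ih1 =>
    apply represents_of_b2z
    intro x
    have e0 : b2z (t0.eval x) = ∑ N ∈ treeRep t0, b2z (evalMono N x) := by
      rw [← ih0 x, polyEval_b2z]
    have e1 : b2z (t1.eval x) = ∑ N ∈ treeRep t1, b2z (evalMono N x) := by
      rw [← ih1 x, polyEval_b2z]
    rw [show treeRep (DTree.node i t0 t1)
      = symmDiff (treeRep t0) (mulX i (symmDiff (treeRep t0) (treeRep t1))) from rfl]
    rw [sum_symmDiff', sum_mulX, sum_symmDiff', ← e0, ← e1]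
    show b2z (if x i then t1.eval x else t0.eval x) = _
    cases hxi : x i
    · simp only [Bool.false_eq_true, if_false]
      have h2 : b2z false = 0 := rfl
      rw [h2, zero_mul, add_zero]
    · simp only [if_true]
      have h2 : b2z true = 1 := rfl
      rw [h2, one_mul]
      have : b2z (t0.eval x) + b2z (t0.eval x) = 0 := by
        cases t0.eval x <;> simp [b2z] <;> decide
      ring_nf
      rw [show ((2:ZMod 2)) = 0 from rfl]
      ring
end
section
variable {n : ℕ}

lemma prefixTree_eval (l : List (Fin n)) (k : List Bool → DTree n) (x : Fin n → Bool) :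
    (prefixTree l k).eval x = (k (l.map x)).eval x := by
  induction l generalizing k with
  | nil => rfl
  | cons i l ih =>
    show (if x i then (prefixTree l fun bs => k (true :: bs)).eval x
      else (prefixTree l fun bs => k (false :: bs)).eval x) = (k (x i :: l.map x)).eval x
    cases x i
    · simp only [Bool.false_eq_true, if_false]
      exact ih _
    · simp only [if_true]
      exact ih _

lemma prefixTree_depth (l : List (Fin n)) (k : List Bool → DTree n) (c : ℕ)
    (h : ∀ bs : List Bool, bs.length = l.length → (k bs).depth ≤ c) :
    (prefixTree l k).depth ≤ l.length + c := by
  induction l generalizing k with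
  | nil => simpa [prefixTree] using h [] rfl
  | cons i l ih =>
    have h0 := ih (fun bs => k (false :: bs)) (fun bs hbs => h (false :: bs) (by simp [hbs]))
    have h1 := ih (fun bs => k (true :: bs)) (fun bs hbs => h (true :: bs) (by simp [hbs]))
    show 1 + max (prefixTree l fun bs => k (false :: bs)).depth
      (prefixTree l fun bs => k (true :: bs)).depth ≤ (i :: l).length + c
    simp only [List.length_cons]
    omega

lemma exists_map_eq (l : List (Fin n)) (hnd : l.Nodup) :
    ∀ bs : List Bool, bs.length = l.length → ∃ ξ : Fin n → Bool, l.map ξ = bs := by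
  induction l with
  | nil =>
    intro bs hbs
    rw [List.length_eq_zero_iff.mp hbs]
    exact ⟨fun _ => false, rfl⟩
  | cons i l ih =>
    intro bs hbs
    cases bs with
    | nil => simp at hbs
    | cons b bs' =>
      obtain ⟨ξ, hξ⟩ := ih (List.Nodup.of_cons hnd) bs' (by simpa using hbs)
      refine ⟨Function.update ξ i b, ?_⟩
      have hnotmem : i ∉ l := (List.nodup_cons.mp hnd).1
      simp only [List.map_cons, Function.update_self]
      congr 1
      rw [← hξ]
      apply List.map_congr_left
      intro j hj
      apply Function.update_of_ne
      intro hEq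
      rw [hEq] at hj
      exact hnotmem hj

lemma map_eq_on (l : List (Fin n)) (ξ ξ' : Fin n → Bool) (h : l.map ξ = l.map ξ') :
    ∀ j ∈ l, ξ j = ξ' j := by
  induction l with
  | nil => intro j hj; simp at hj
  | cons i l ih =>
    simp only [List.map_cons, List.cons.injEq] at h
    intro j hj
    rcases List.mem_cons.mp hj with rfl | hj2
    · exact h.1
    · exact ih h.2 j hj2
end
section
variable {n : ℕ}

lemma MMTree_eval {f : (Fin n → Bool) → Bool} {Tf : DTree n} (hMM : MMTree f Tf) :
    ∀ x, Tf.eval x = f x := by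
  induction hMM with
  | leaf f b hconst => intro x; exact (hconst x).symm
  | node f hnc S hS M hM hmax k hk ih =>
    intro x
    rw [prefixTree_eval, ih x x]
    show f (fun j => if j ∈ M then x j else x j) = f x
    congr 1
    funext j
    exact ite_self (x j)

lemma maximal_nonempty {S : Finset (Finset (Fin n))} {f : (Fin n → Bool) → Bool}
    {M : Finset (Fin n)} (hnc : ¬ ∃ b : Bool, ∀ x, f x = b) (hS : Represents S f)
    (hM : M ∈ S) (hmax : ∀ M' ∈ S, M' ≠ M → ¬ M ⊆ M') : M.Nonempty := by
  rcases Finset.eq_empty_or_nonempty M with rfl | h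
  · exfalso
    apply hnc
    refine ⟨true, fun x => ?_⟩
    rw [← hS x]
    have hSsing : S = {∅} := by
      apply Finset.eq_singleton_iff_unique_mem.mpr
      refine ⟨hM, fun N hN => ?_⟩
      by_contra hne
      exact hmax N hN hne (Finset.empty_subset N)
    rw [hSsing]
    unfold polyEval
    rw [Finset.filter_singleton, if_pos (by rw [evalMono_empty])]
    rfl
  · exact h

lemma MMTree_depth : ∀ d : ℕ, ∀ f : (Fin n → Bool) → Bool, ∀ t : DTree n, ∀ Tf : DTree n,
    (∀ x, t.eval x = f x) → t.depth ≤ d → MMTree f Tf → Tf.depth ≤ d ^ 2 := by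
  intro d
  induction d using Nat.strong_induction_on with
  | _ d ih =>
  intro f t Tf heval hdep hMM
  cases hMM with
  | leaf f b hconst => exact Nat.zero_le _
  | node f hnc S hS M hM hmax k hk =>
    have hMne : M.Nonempty := maximal_nonempty hnc hS hM hmax
    have hcard : M.card ≤ d := le_trans (card_monomial_le_depth t heval hS hM) hdep
    have hd1 : 1 ≤ d := le_trans (Finset.card_pos.mpr hMne) hcard
    have hkd : ∀ bs : List Bool, bs.length = (M.sort (· ≤ ·)).length →
        (k bs).depth ≤ (d - 1) ^ 2 := by
      intro bs hbs
      obtain ⟨ξ, hξ⟩ := exists_map_eq _ (Finset.sort_nodup M _) bs hbs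
      obtain ⟨t', ht'e, ht'd⟩ := lemB d t f S M hdep heval hS hM hMne hmax ξ
      have hmm : MMTree (restrictSet f M ξ) (k bs) := by rw [← hξ]; exact hk ξ
      exact ih (d - 1) (by omega) _ t' (k bs) ht'e (by omega) hmm
    have hbound := prefixTree_depth (M.sort (· ≤ ·)) k ((d - 1) ^ 2) hkd
    have hlen : (M.sort (· ≤ ·)).length = M.card := Finset.length_sort _
    obtain ⟨e, rfl⟩ : ∃ e, d = e + 1 := ⟨d - 1, by omega⟩
    have he1 : e + 1 - 1 = e := rfl
    rw [he1] at hbound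
    have hsq : (e + 1) ^ 2 = e ^ 2 + 2 * e + 1 := by ring
    rw [hlen] at hbound
    omega

lemma MMTree_exists : ∀ d : ℕ, ∀ f : (Fin n → Bool) → Bool, ∀ t : DTree n,
    (∀ x, t.eval x = f x) → t.depth ≤ d → ∃ Tf : DTree n, MMTree f Tf := by
  intro d
  induction d using Nat.strong_induction_on with
  | _ d ih =>
  intro f t heval hdep
  by_cases hconst : ∃ b : Bool, ∀ x, f x = b
  · obtain ⟨b, hb⟩ := hconst
    exact ⟨DTree.leaf b, MMTree.leaf f b hb⟩
  · have hS : Represents (treeRep t) f := fun x => (treeRep_represents t x).trans (heval x)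
    set S := treeRep t with hSdef
    have hSne : S.Nonempty := by
      rcases Finset.eq_empty_or_nonempty S with hE | h
      · exfalso
        apply hconst
        refine ⟨false, fun x => ?_⟩
        rw [← hS x, hE]
        simp [polyEval]
      · exact h
    obtain ⟨M, hM, hMmax⟩ := Finset.exists_max_image S Finset.card hSne
    have hmax : ∀ M' ∈ S, M' ≠ M → ¬ M ⊆ M' := by
      intro M' hM' hne hsub
      have hlt : M.card < M'.card := Finset.card_lt_card
        (Finset.ssubset_iff_subset_ne.mpr ⟨hsub, fun hEq => hne hEq.symm⟩)
      exact absurd (hMmax M' hM') (by omega)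
    have hMne : M.Nonempty := maximal_nonempty hconst hS hM hmax
    have hrec : ∀ ξ : Fin n → Bool, ∃ Tξ : DTree n, MMTree (restrictSet f M ξ) Tξ := by
      intro ξ
      obtain ⟨t', ht'e, ht'd⟩ := lemB d t f S M hdep heval hS hM hMne hmax ξ
      exact ih (d - 1) (by omega) _ t' ht'e (by omega)
    classical
    choose F hF using hrec
    set k : List Bool → DTree n := fun bs =>
      if hbs : ∃ ξ : Fin n → Bool, (M.sort (· ≤ ·)).map ξ = bs then F (Classical.choose hbs)
      else DTree.leaf false with hkdef
    refine ⟨prefixTree (M.sort (· ≤ ·)) k, MMTree.node f hconst S hS M hM hmax k ?_⟩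
    intro ξ
    have hbs : ∃ ξ' : Fin n → Bool, (M.sort (· ≤ ·)).map ξ' = (M.sort (· ≤ ·)).map ξ := ⟨ξ, rfl⟩
    have hkk : k ((M.sort (· ≤ ·)).map ξ) = F (Classical.choose hbs) := by
      rw [hkdef]
      exact dif_pos hbs
    have hspec := Classical.choose_spec hbs
    have hres : restrictSet f M ξ = restrictSet f M (Classical.choose hbs) := by
      funext x
      unfold restrictSet
      congr 1
      funext j
      by_cases hj : j ∈ M
      · rw [if_pos hj, if_pos hj]
        exact (map_eq_on _ _ _ hspec j ((Finset.mem_sort _).mpr hj)).symm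
      · rw [if_neg hj, if_neg hj]
    rw [hkk, hres]
    exact hF (Classical.choose hbs)

end

/-- For `f` computable by a decision tree of depth at most `d`, the recursively
built tree `T_f` exists, computes `f`, and has depth at most `d ^ 2`. -/
theorem stmt4 {n d : ℕ} (f : (Fin n → Bool) → Bool)
    (T : DTree n) (hT : ∀ x, T.eval x = f x) (hdepth : T.depth ≤ d) :
    (∃ Tf : DTree n, MMTree f Tf) ∧
    ∀ Tf : DTree n, MMTree f Tf → (∀ x, Tf.eval x = f x) ∧ Tf.depth ≤ d ^ 2 := by
  exact ⟨MMTree_exists d f T hT hdepth,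
    fun Tf hMM => ⟨MMTree_eval hMM, MMTree_depth d f T Tf hT hdepth hMM⟩⟩
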